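/- For the continuous-time gradient estimator θ̂'(t) = γΔ(t)(Δ(t)θ - Δ(t)θ̂(t)) with constant θ, and w^D(t) = exp(-γ∫_{t-T_D}^t Δ(s)² ds) (with Δ ≡ 0 on negative times), the identity (1 - w^D(t))·θ = θ̂(t) - w^D(t)·θ̂(t - T_D) holds for all t ≥ T_D. -/

import Mathlib

theorem ct_delayed_key_relation
    (γ TD θ : ℝ) (hγ : 0 < γ) (hTD : 0 < TD)
    (Δ θh : ℝ → ℝ) (hΔ : Continuous Δ)
    (hneg : ∀ s, s < 0 → Δ s = 0)
    (hode : ∀ t, 0 ≤ t → HasDerivAt θh (γ * Δ t * (Δ t * θ - Δ t * θh t)) t)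
    (wD : ℝ → ℝ)
    (hwD : ∀ t, wD t = Real.exp (-γ * ∫ s in (t - TD)..t, (Δ s) ^ 2)) :
    ∀ t, TD ≤ t → (1 - wD t) * θ = θh t - wD t * θh (t - TD) := by
  intro t ht
  have hΔ2 : Continuous fun s => (Δ s) ^ 2 := hΔ.pow 2
  set F : ℝ → ℝ := fun u => ∫ s in (0:ℝ)..u, (Δ s) ^ 2 with hF
  have hFd : ∀ u : ℝ, HasDerivAt F ((Δ u) ^ 2) u := by
    intro u
    exact intervalIntegral.integral_hasDerivAt_right
      (hΔ2.intervalIntegrable 0 u)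
      (hΔ2.stronglyMeasurableAtFilter _ _)
      hΔ2.continuousAt
  set g : ℝ → ℝ := fun u => (θh u - θ) * Real.exp (γ * F u) with hg
  have hgd : ∀ u, 0 ≤ u → HasDerivAt g 0 u := by
    intro u hu
    have h1 : HasDerivAt (fun v => θh v - θ)
        (γ * Δ u * (Δ u * θ - Δ u * θh u)) u := (hode u hu).sub_const θ
    have h2 : HasDerivAt (fun v => Real.exp (γ * F v))
        (γ * (Δ u) ^ 2 * Real.exp (γ * F u)) u := by
      have := ((hFd u).const_mul γ).exp
      simpa [mul_comm, mul_assoc, mul_left_comm] using this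
    have := h1.mul h2
    exact this.congr_deriv (by ring)
  -- g is constant on [t - TD, t]
  have htTD : (0:ℝ) ≤ t - TD := by linarith
  have hconst : g t = g (t - TD) := by
    have hcont : ContinuousOn g (Set.Icc (t - TD) t) := by
      intro x hx
      exact ((hgd x (le_trans htTD hx.1)).continuousAt).continuousWithinAt
    have hderiv : ∀ x ∈ Set.Ico (t - TD) t,
        HasDerivWithinAt g 0 (Set.Ici x) x := fun x hx =>
      (hgd x (le_trans htTD hx.1)).hasDerivWithinAt
    have := constant_of_has_deriv_right_zero hcont hderiv t
      (Set.right_mem_Icc.mpr (by linarith))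
    simpa using this
  -- unpack
  have hsplit : F t - F (t - TD) = ∫ s in (t - TD)..t, (Δ s) ^ 2 := by
    have h : (∫ s in (0:ℝ)..(t - TD), (Δ s) ^ 2) + ∫ s in (t - TD)..t, (Δ s) ^ 2
        = ∫ s in (0:ℝ)..t, (Δ s) ^ 2 :=
      intervalIntegral.integral_add_adjacent_intervals
        (hΔ2.intervalIntegrable 0 (t - TD)) (hΔ2.intervalIntegrable (t - TD) t)
    simp only [hF]
    linarith [h]
  have hwDt : wD t = Real.exp (γ * F (t - TD)) / Real.exp (γ * F t) := by
    rw [hwD, ← Real.exp_sub]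
    congr 1
    rw [← hsplit]; ring
  have hepos : (0:ℝ) < Real.exp (γ * F t) := Real.exp_pos _
  have hkey : (θh t - θ) * Real.exp (γ * F t)
      = (θh (t - TD) - θ) * Real.exp (γ * F (t - TD)) := hconst
  rw [hwDt]
  field_simp
  nlinarith [hkey, Real.exp_pos (γ * F (t - TD))]
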